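/- Let 0 ≤ λ < α and let h: [0,1] → [λ, α] be non-decreasing, continuous on (0,1], and satisfy the Dini derivative bound D⁺h(θ) ≤ (h(θ) − λ)(α − h(θ))/((α − λ)·θ) for all θ ∈ (0,1). Then for all 0 < θ ≤ φ ≤ 1, h(φ) ≤ h(θ) + (h(θ) − λ)(α − h(θ))·(φ − θ)/(φ·(h(θ) − λ) + θ·(α − h(θ))). -/

import Mathlib

open Filter

/-- Upper right Dini derivative as an `EReal`. -/
noncomputable def upperDini (f : ℝ → ℝ) (x : ℝ) : EReal :=
  limsup (fun ε : ℝ => (((f (x + ε) - f x) / ε : ℝ) : EReal)) (nhdsWithin 0 (Set.Ioi 0))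

/-- If `h : [0,1] → [λ,α]` is non-decreasing, continuous on `(0,1]`, and satisfies the Dini
bound `D⁺h(θ) ≤ (h(θ)−λ)(α−h(θ))/((α−λ)θ)` on `(0,1)`, then for `0 < θ ≤ φ ≤ 1`,
`h(φ) ≤ h(θ) + (h(θ)−λ)(α−h(θ))(φ−θ)/(φ(h(θ)−λ)+θ(α−h(θ)))`. -/
theorem stmt7 (lam alp : ℝ) (h0 : 0 ≤ lam) (hla : lam < alp)
    (h : ℝ → ℝ)
    (hmap : ∀ θ ∈ Set.Icc (0 : ℝ) 1, h θ ∈ Set.Icc lam alp)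
    (hmono : MonotoneOn h (Set.Icc 0 1))
    (hcont : ContinuousOn h (Set.Ioc 0 1))
    (hdini : ∀ θ ∈ Set.Ioo (0 : ℝ) 1,
      upperDini h θ ≤ (((h θ - lam) * (alp - h θ) / ((alp - lam) * θ) : ℝ) : EReal)) :
    ∀ θ φ : ℝ, 0 < θ → θ ≤ φ → φ ≤ 1 →
      h φ ≤ h θ + (h θ - lam) * (alp - h θ) * (φ - θ) /
        (φ * (h θ - lam) + θ * (alp - h θ)) := by
  intro θ φ hθ hθφ hφ1
  have hθ1 : θ ≤ 1 := hθφ.trans hφ1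
  have hs : (0:ℝ) < alp - lam := sub_pos.2 hla
  obtain ⟨hAle, hBle⟩ := hmap θ ⟨hθ.le, hθ1⟩
  set A := h θ - lam with hA
  set Bb := alp - h θ with hBb
  have hA0 : 0 ≤ A := sub_nonneg.2 hAle
  have hB0 : 0 ≤ Bb := sub_nonneg.2 hBle
  have hABs : A + Bb = alp - lam := by rw [hA, hBb]; ring
  have hD : ∀ x ∈ Set.Icc θ 1, 0 < x * A + θ * Bb := by
    intro x hx
    have h1 : (x - θ) * A ≥ 0 := mul_nonneg (by linarith [hx.1]) hA0
    have h2 : 0 < θ * (A + Bb) := by rw [hABs]; positivity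
    nlinarith
  set B : ℝ → ℝ := fun x => lam + A * (alp - lam) * x / (x * A + θ * Bb) with hBdef
  set B' : ℝ → ℝ := fun x => A * (alp - lam) * (θ * Bb) / (x * A + θ * Bb)^2 with hB'def
  set c : ℝ → ℝ := fun x => (h x - lam) * (alp - h x) / ((alp - lam) * x) with hcdef
  have hBθ : B θ = h θ := by
    have hne : θ * A + θ * Bb ≠ 0 := (hD θ ⟨le_rfl, hθ1⟩).ne'
    simp only [hBdef]
    rw [hA, hBb] at hne ⊢
    field_simp [hs.ne']
    ring
  have hBrange : ∀ x ∈ Set.Icc θ 1, B x ∈ Set.Icc lam alp := by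
    intro x hx
    have hDx : 0 < x * A + θ * Bb := hD x hx
    constructor
    · have hx0 : (0:ℝ) ≤ x := le_trans hθ.le hx.1
      have : 0 ≤ A * (alp - lam) * x / (x * A + θ * Bb) := by
        apply div_nonneg _ hDx.le
        positivity
      simp only [hBdef]; linarith
    · have key : alp - B x = (alp - lam) * (θ * Bb) / (x * A + θ * Bb) := by
        simp only [hBdef]
        rw [hA, hBb] at hDx ⊢
        rw [add_div' _ _ _ hDx.ne', sub_div' hDx.ne', div_eq_div_iff hDx.ne' hDx.ne']
        ring
      have h2 : 0 ≤ (alp - lam) * (θ * Bb) / (x * A + θ * Bb) :=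
        div_nonneg (by positivity) hDx.le
      exact sub_nonneg.1 (h2.trans key.ge)
  have hB'eq : ∀ x ∈ Set.Ico θ 1, B' x = (B x - lam) * (alp - B x) / ((alp - lam) * x) := by
    intro x hx
    have hDx : x * A + θ * Bb ≠ 0 := (hD x ⟨hx.1, hx.2.le⟩).ne'
    have hx0 : (0:ℝ) < x := lt_of_lt_of_le hθ hx.1
    simp only [hBdef, hB'def]
    rw [hA, hBb] at hDx ⊢
    rw [add_div' _ _ _ hDx, sub_div' hDx, div_sub' hDx, div_mul_div_comm, div_div, div_eq_div_iff (pow_ne_zero 2 hDx) (mul_ne_zero (mul_ne_zero hDx hDx) (mul_ne_zero hs.ne' hx0.ne'))]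
    ring
  have hBderiv : ∀ x ∈ Set.Ico θ 1, HasDerivAt B (B' x) x := by
    intro x hx
    have hDx : x * A + θ * Bb ≠ 0 := (hD x ⟨hx.1, hx.2.le⟩).ne'
    have h1 : HasDerivAt (fun y : ℝ => A * (alp - lam) * y) (A * (alp - lam)) x := by
      simpa using (hasDerivAt_id x).const_mul (A * (alp - lam))
    have h2 : HasDerivAt (fun y : ℝ => y * A + θ * Bb) A x := by
      simpa using ((hasDerivAt_id x).mul_const A).add_const (θ * Bb)
    have h3 := (h1.div h2 hDx).const_add lam
    refine h3.congr_deriv ?_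
    show _ = A * (alp - lam) * (θ * Bb) / (x * A + θ * Bb)^2
    rw [div_eq_div_iff (pow_ne_zero 2 hDx) (pow_ne_zero 2 hDx)]
    ring
  have hBcont : ContinuousOn B (Set.Icc θ 1) := by
    apply continuousOn_const.add
    apply ContinuousOn.div (by fun_prop) (by fun_prop)
    exact fun x hx => (hD x hx).ne'
  have hcont' : ContinuousOn h (Set.Icc θ 1) :=
    hcont.mono (fun x hx => ⟨lt_of_lt_of_le hθ hx.1, hx.2⟩)
  have hf' : ∀ x ∈ Set.Ico θ 1, ∀ r : ℝ, c x < r →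
      ∃ᶠ z in nhdsWithin x (Set.Ioi x), slope h x z < r := by
    intro x hx r hr
    have hx01 : x ∈ Set.Ioo (0:ℝ) 1 := ⟨lt_of_lt_of_le hθ hx.1, hx.2⟩
    have hlim := hdini x hx01
    have hlt : upperDini h x < (r : EReal) := by
      refine lt_of_le_of_lt hlim ?_
      exact_mod_cast hr
    have hev : ∀ᶠ ε in nhdsWithin (0:ℝ) (Set.Ioi 0),
        (((h (x + ε) - h x) / ε : ℝ) : EReal) < (r : EReal) :=
      eventually_lt_of_limsup_lt hlt
    have hev' : ∀ᶠ ε in nhdsWithin (0:ℝ) (Set.Ioi 0), (h (x + ε) - h x) / ε < r :=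
      hev.mono (fun ε hε => by exact_mod_cast hε)
    have htend : Tendsto (fun z : ℝ => z - x) (nhdsWithin x (Set.Ioi x))
        (nhdsWithin (0:ℝ) (Set.Ioi 0)) := by
      apply tendsto_nhdsWithin_of_tendsto_nhds_of_eventually_within
      · have h4 : Tendsto (fun z : ℝ => z - x) (nhds x) (nhds (x - x)) :=
          (continuous_id.sub continuous_const).tendsto x
        simpa using h4.mono_left nhdsWithin_le_nhds
      · exact eventually_nhdsWithin_of_forall (fun z hz => Set.mem_Ioi.2 (sub_pos.2 hz))
    have h5 := htend.eventually hev'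
    refine (h5.mono ?_).frequently
    intro z hz
    have h6 : x + (z - x) = z := by ring
    rw [h6] at hz
    rwa [slope_def_field]
  have main : ∀ ε : ℝ, 0 < ε → h φ ≤ B φ + ε * (φ - θ) := by
    intro ε hε
    have happ := image_le_of_liminf_slope_right_lt_deriv_boundary' (f := h) (f' := c)
      (a := θ) (b := 1) hcont' hf'
      (B := fun x => B x + ε * (x - θ)) (B' := fun x => B' x + ε)
      (by simp [hBθ]) (hBcont.add (by fun_prop))
      (fun x hx => by
        have h1 : HasDerivWithinAt (fun y : ℝ => ε * (y - θ)) ε (Set.Ici x) x := by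
          simpa using ((hasDerivWithinAt_id x (Set.Ici x)).sub_const θ).const_mul ε
        exact ((hBderiv x hx).hasDerivWithinAt).add h1)
      ?_ ⟨hθφ, hφ1⟩
    · exact happ
    · intro x hx hfx
      have hx0 : (0:ℝ) < x := lt_of_lt_of_le hθ hx.1
      have hKpos : (0:ℝ) < (alp - lam) * x := by positivity
      obtain ⟨hy1l, hy1u⟩ := hmap x ⟨hx0.le, hx.2.le⟩
      obtain ⟨hy2l, hy2u⟩ := hBrange x ⟨hx.1, hx.2.le⟩
      have hyd : h x - B x = ε * (x - θ) := by
        have := hfx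
        linarith [this]
      have hxθ : 0 ≤ x - θ := by linarith [hx.1]
      have hpoly : (h x - lam) * (alp - h x) <
          (B x - lam) * (alp - B x) + ε * ((alp - lam) * x) := by
        nlinarith [mul_nonneg (mul_nonneg hε.le hxθ) (by linarith : (0:ℝ) ≤ h x - lam),
          mul_nonneg (mul_nonneg hε.le hxθ) (by linarith : (0:ℝ) ≤ B x - lam),
          mul_pos (mul_pos hε hs) hθ, mul_nonneg (mul_nonneg hε.le hxθ) hs.le]
      have h7 : ((B x - lam) * (alp - B x) + ε * ((alp - lam) * x)) / ((alp - lam) * x)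
          = (B x - lam) * (alp - B x) / ((alp - lam) * x) + ε := by
        field_simp
      have hdiv : (h x - lam) * (alp - h x) / ((alp - lam) * x) <
          (B x - lam) * (alp - B x) / ((alp - lam) * x) + ε := by
        rw [← h7]; gcongr
      show c x < B' x + ε
      rw [hB'eq x hx]
      exact hdiv
  have hBφ : h φ ≤ B φ := by
    refine le_of_forall_pos_le_add (fun ε hε => ?_)
    have h1 := main ε hε
    have h2 : ε * (φ - θ) ≤ ε := by nlinarith
    linarith
  have hfin : B φ = h θ + A * Bb * (φ - θ) / (φ * A + θ * Bb) := by
    have hDφ : φ * A + θ * Bb ≠ 0 := (hD φ ⟨hθφ, hφ1⟩).ne'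
    simp only [hBdef]
    rw [hA, hBb] at hDφ ⊢
    rw [add_div' _ _ _ hDφ, add_div' _ _ _ hDφ, div_eq_div_iff hDφ hDφ]
    ring
  rw [hfin] at hBφ
  exact hBφ
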